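/- For every fixed realization H ⊆ E and every fixed node u ∈ N, the indicator function g_{H,u}(S) = 1 if u is reachable from some node of P \ S in H[V \ S] and g_{H,u}(S) = 0 otherwise, is submodular on subsets of P: for all A ⊆ B ⊆ P and x ∈ P \ B, g_{H,u}(A ∪ {x}) − g_{H,u}(A) ≥ g_{H,u}(B ∪ {x}) − g_{H,u}(B). -/

import Mathlib

open Finset

/-- A single transmission step along a live edge of `H`, avoiding the removed vertex set `S`. -/
def MintStep {α : Type*} (H : Finset (α × α)) (S : Finset α) (x y : α) : Prop :=
  (x, y) ∈ H ∧ x ∉ S ∧ y ∉ S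

/-- `u` is reachable from `v` in `H[V \ S]`: there is a directed path (possibly of length 0)
from `v` to `u` using only edges of `H`, all of whose vertices avoid `S`. -/
def MintReach {α : Type*} (H : Finset (α × α)) (S : Finset α) (v u : α) : Prop :=
  v ∉ S ∧ Relation.ReflTransGen (MintStep H S) v u

open Classical in
/-- The indicator `g_{H,u}(S)`: `1` if `u` is reachable from some node of `P \ S`
in `H[V \ S]`, and `0` otherwise. -/
noncomputable def mintg {α : Type*} [DecidableEq α] (P : Finset α) (H : Finset (α × α))
    (u : α) (S : Finset α) : ℤ :=
  if ∃ v ∈ P \ S, MintReach H S v u then 1 else 0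

lemma mint_reach_mono {α : Type*} {H : Finset (α × α)} {S S' : Finset α} (hSS : S ⊆ S')
    {v u : α} (h : MintReach H S' v u) : MintReach H S v u := by
  obtain ⟨hv, hp⟩ := h
  exact ⟨fun hh => hv (hSS hh),
    Relation.ReflTransGen.mono
      (fun a b hab => ⟨hab.1, fun hh => hab.2.1 (hSS hh), fun hh => hab.2.2 (hSS hh)⟩) _ _ hp⟩

/-- Enlarging the removed set by a subset `T` of `P` preserves reachability, as long as the
source avoids `T`, since no edge of `H` points into `P`. -/
lemma mint_rtg_union {α : Type*} [DecidableEq α] {H : Finset (α × α)} {P S T : Finset α}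
    (hinc : ∀ e ∈ H, e.2 ∉ P) (hT : T ⊆ P) {v u : α}
    (hp : Relation.ReflTransGen (MintStep H S) v u) (hvT : v ∉ T) :
    Relation.ReflTransGen (MintStep H (S ∪ T)) v u := by
  revert hvT
  induction hp using Relation.ReflTransGen.head_induction_on with
  | refl => exact fun _ => .refl
  | @head a c step rest ih =>
      intro haT
      have hcP : c ∉ P := hinc (a, c) step.1
      have hcT : c ∉ T := fun hh => hcP (hT hh)
      exact Relation.ReflTransGen.head
        ⟨step.1, by simp [step.2.1, haT], by simp [step.2.2, hcT]⟩ (ih hcT)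

lemma mint_reach_union {α : Type*} [DecidableEq α] {H : Finset (α × α)} {P S T : Finset α}
    (hinc : ∀ e ∈ H, e.2 ∉ P) (hT : T ⊆ P) {v u : α}
    (h : MintReach H S v u) (hvT : v ∉ T) : MintReach H (S ∪ T) v u :=
  ⟨by simp [h.1, hvT], mint_rtg_union hinc hT h.2 hvT⟩

/-- For every fixed realization `H ⊆ E` and node `u ∈ N`, the indicator `g_{H,u}` is
submodular on subsets of `P`. -/
theorem stmt2 {α : Type*} [DecidableEq α] (E H : Finset (α × α)) (hHE : H ⊆ E)
    (w : α × α → ℝ) (hw : ∀ e ∈ E, 0 ≤ w e ∧ w e ≤ 1)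
    (P : Finset α) (hinc : ∀ e ∈ E, e.2 ∉ P) (u : α) (hu : u ∉ P) :
    ∀ A B : Finset α, ∀ x : α, A ⊆ B → B ⊆ P → x ∈ P → x ∉ B →
      mintg P H u (B ∪ {x}) - mintg P H u B ≤ mintg P H u (A ∪ {x}) - mintg P H u A := by
  intro A B x hAB hBP hxP hxB
  classical
  have hincH : ∀ e ∈ H, e.2 ∉ P := fun e he => hinc e (hHE he)
  have hxA : x ∉ A := fun h => hxB (hAB h)
  -- monotonicity of the existence predicate
  have mono : ∀ S S' : Finset α, S ⊆ S' →
      (∃ v ∈ P \ S', MintReach H S' v u) → (∃ v ∈ P \ S, MintReach H S v u) := by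
    intro S S' hSS h0
    obtain ⟨v, hv, hr⟩ := h0
    simp only [mem_sdiff] at hv
    exact ⟨v, mem_sdiff.mpr ⟨hv.1, fun h => hv.2 (hSS h)⟩, mint_reach_mono hSS hr⟩
  set pA := ∃ v ∈ P \ A, MintReach H A v u with hpA
  set pA' := ∃ v ∈ P \ (A ∪ {x}), MintReach H (A ∪ {x}) v u with hpA'
  set pB := ∃ v ∈ P \ B, MintReach H B v u with hpB
  set pB' := ∃ v ∈ P \ (B ∪ {x}), MintReach H (B ∪ {x}) v u with hpB'
  have hBB' : B ⊆ B ∪ {x} := subset_union_left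
  have hAA' : A ⊆ A ∪ {x} := subset_union_left
  have hA'B' : A ∪ {x} ⊆ B ∪ {x} := union_subset_union_left hAB
  have key : pA → ¬ pA' → pB := by
    intro h0 hnA'
    obtain ⟨v0, hv, hr⟩ := h0
    simp only [mem_sdiff] at hv
    by_cases hvx : v0 = x
    · rw [hvx] at hr
      -- v = x reaches u avoiding A; extend removed set to B = A ∪ (B \ A)
      have hT : B \ A ⊆ P := fun y hy => hBP (mem_sdiff.mp hy).1
      have hxT : x ∉ B \ A := fun h => hxB (mem_sdiff.mp h).1
      have := mint_reach_union hincH hT hr hxT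
      rw [Finset.union_sdiff_of_subset hAB] at this
      exact ⟨x, mem_sdiff.mpr ⟨hxP, hxB⟩, this⟩
    · exfalso
      apply hnA'
      have hT : ({x} : Finset α) ⊆ P := by simp [hxP]
      have hvT : v0 ∉ ({x} : Finset α) := by simp [hvx]
      exact ⟨v0, by simp [mem_sdiff, hv.1, hv.2, hvx], mint_reach_union hincH hT hr hvT⟩
  simp only [mintg, ← hpA, ← hpA', ← hpB, ← hpB']
  by_cases hA' : pA'
  · have hA : pA := mono _ _ hAA' hA'
    rw [if_pos hA, if_pos hA']
    by_cases hB' : pB'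
    · rw [if_pos hB', if_pos (mono _ _ hBB' hB')]
    · rw [if_neg hB']
      by_cases hB : pB
      · rw [if_pos hB]; omega
      · rw [if_neg hB]; omega
  · by_cases hA : pA
    · have hB : pB := key hA hA'
      have hB' : ¬ pB' := fun h => hA' (mono _ _ hA'B' h)
      rw [if_pos hA, if_neg hA', if_pos hB, if_neg hB']
    · have hB : ¬ pB := fun h => hA (mono _ _ hAB h)
      have hB' : ¬ pB' := fun h => hA' (mono _ _ hA'B' h)
      rw [if_neg hA, if_neg hA', if_neg hB, if_neg hB']
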